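/- Every C_d-action on a category C is isomorphic to the C_d-action induced by a compatible pair: namely, if {F_{g^i}, ε_{g^i,g^j}} is a C_d-action with F = F_g, then the natural isomorphism c = u ∘ ε^{(d)} : F^d ≅ Id_C (where ε^{(d)} : F^d ≅ F_{g^d} = F_e is the iterated composite of the ε's and u the unit) satisfies F c = c F, and the given action is isomorphic to the action induced by the pair (F, c). -/

import Mathlib

open CategoryTheory

universe v u v₂ u₂

/-- A (weak) action of a group `G` on a category `C`: autoequivalences `F g` together with
natural isomorphisms `ε g h : F h ⋙ F g ≅ F (g * h)` (i.e. `F_g F_h ≅ F_{gh}`) satisfying the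
2-cocycle condition `ε_{gh,k} ∘ (ε_{g,h} ▷ F_k) = ε_{g,hk} ∘ (F_g ◁ ε_{h,k})`, stated
componentwise. -/
structure GrpAction (G : Type*) [Group G] (C : Type u) [Category.{v} C] where
  F : G → C ⥤ C
  isEquiv : ∀ g : G, (F g).IsEquivalence
  ε : ∀ g h : G, F h ⋙ F g ≅ F (g * h)
  cocycle : ∀ (g h k : G) (X : C),
    (ε g h).hom.app ((F k).obj X) ≫ (ε (g * h) k).hom.app X ≫
        eqToHom (by rw [mul_assoc]) =
      (F g).map ((ε h k).hom.app X) ≫ (ε g (h * k)).hom.app X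
variable {C : Type u} [Category.{v} C]

/-- Iterated composition `F^n` of an endofunctor (with `F` applied innermost first). -/
def fpow (F : C ⥤ C) : ℕ → C ⥤ C
  | 0 => 𝟭 C
  | n + 1 => F ⋙ fpow F n

lemma fpow_comp (F : C ⥤ C) (i j : ℕ) : fpow F j ⋙ fpow F i = fpow F (i + j) := by
  induction j with
  | zero => exact Functor.id_comp _
  | succ j ih =>
    show (F ⋙ fpow F j) ⋙ fpow F i = fpow F (i + (j + 1))
    rw [Functor.assoc, ih]
    rfl

lemma fpow_obj_comm (F : C ⥤ C) (n : ℕ) (X : C) :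
    F.obj ((fpow F n).obj X) = (fpow F n).obj (F.obj X) := by
  induction n generalizing X with
  | zero => rfl
  | succ n ih => exact ih (F.obj X)

/-- A *compatible pair of order `d`*: an endofunctor `F` with a natural isomorphism
`c : F^d ≅ 𝟭 C` satisfying `F ◁ c = c ▷ F` (componentwise). -/
def IsCompatiblePair (d : ℕ) (F : C ⥤ C) (c : fpow F d ≅ 𝟭 C) : Prop :=
  ∀ X : C, F.map (c.hom.app X) = eqToHom (fpow_obj_comm F d X) ≫ c.hom.app (F.obj X)

/-- The structural isomorphisms of the `C_d`-action induced by a compatible pair `(F, c)`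
of order `d`: the identity when `i + j < d`, and `F^{i+j-d} ◁ c` otherwise. -/
noncomputable def inducedEps (d : ℕ) [NeZero d] (F : C ⥤ C) (c : fpow F d ≅ 𝟭 C)
    (x y : Multiplicative (ZMod d)) :
    fpow F (ZMod.val (Multiplicative.toAdd y)) ⋙ fpow F (ZMod.val (Multiplicative.toAdd x)) ≅
      fpow F (ZMod.val (Multiplicative.toAdd (x * y))) :=
  if h : ZMod.val (Multiplicative.toAdd x) + ZMod.val (Multiplicative.toAdd y) < d then
    eqToIso (by
      rw [fpow_comp]
      congr 1
      rw [toAdd_mul, ZMod.val_add, Nat.mod_eq_of_lt h])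
  else
    eqToIso (by
      rw [fpow_comp, fpow_comp]
      congr 1
      have hx := ZMod.val_lt (Multiplicative.toAdd x)
      have hy := ZMod.val_lt (Multiplicative.toAdd y)
      omega) ≪≫
    Functor.isoWhiskerRight c
      (fpow F (ZMod.val (Multiplicative.toAdd x) + ZMod.val (Multiplicative.toAdd y) - d)) ≪≫
    eqToIso (by
      rw [Functor.id_comp]
      congr 1
      have hx := ZMod.val_lt (Multiplicative.toAdd x)
      have hy := ZMod.val_lt (Multiplicative.toAdd y)
      rw [toAdd_mul, ZMod.val_add,
        Nat.mod_eq_sub_mod (by omega), Nat.mod_eq_of_lt (by omega)])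

variable {G : Type*} [Group G]

/-- The iterated isomorphisms `ε^{(i)} : Fⁱ ≅ F_{gⁱ}` attached to a `G`-action and a chosen
element `g`, defined by `ε^{(0)} = u⁻¹`, `ε^{(i+1)} = ε_{gⁱ, g} ∘ (ε^{(i)} ▷ F_g)`. -/
noncomputable def epsIter (A : GrpAction G C) (g : G) (u : A.F 1 ≅ 𝟭 C) :
    ∀ i : ℕ, fpow (A.F g) i ≅ A.F (g ^ i)
  | 0 => u.symm ≪≫ eqToIso (by rw [pow_zero])
  | i + 1 =>
    Functor.isoWhiskerLeft (A.F g) (epsIter A g u i) ≪≫ A.ε (g ^ i) g ≪≫ eqToIso (by rw [pow_succ])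

lemma gen_pow_card (d : ℕ) [NeZero d] : (Multiplicative.ofAdd (1 : ZMod d)) ^ d = 1 := by
  rw [← ofAdd_nsmul, nsmul_eq_mul, mul_one, ZMod.natCast_self, ofAdd_zero]

/-- The natural isomorphism `c = u ∘ ε^{(d)} : F^d ≅ 𝟭 C` attached to a `C_d`-action,
where `F = F_g` for the generator `g` of `C_d`. -/
noncomputable def cyclicC (d : ℕ) [NeZero d] (A : GrpAction (Multiplicative (ZMod d)) C)
    (u : A.F 1 ≅ 𝟭 C) : fpow (A.F (Multiplicative.ofAdd (1 : ZMod d))) d ≅ 𝟭 C :=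
  epsIter A (Multiplicative.ofAdd (1 : ZMod d)) u d ≪≫
    eqToIso (by rw [gen_pow_card]) ≪≫ u

section Helpers

lemma GA.eps_congr (A : GrpAction G C) {a a' b b' : G} (ha : a = a') (hb : b = b') (X : C) :
    (A.ε a b).hom.app X =
      eqToHom (by rw [ha, hb]) ≫ (A.ε a' b').hom.app X ≫ eqToHom (by rw [ha, hb]) := by
  subst ha hb; simp

lemma GA.map_congr (A : GrpAction G C) {a a' : G} (h : a = a') {X Y : C} (f : X ⟶ Y) :
    (A.F a).map f = eqToHom (by rw [h]) ≫ (A.F a').map f ≫ eqToHom (by rw [h]) := by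
  subst h; simp

/-- left unit law -/
lemma GA.lunit (A : GrpAction G C) (u : A.F 1 ≅ 𝟭 C)
    (hu : ∀ X : C, (A.ε 1 1).hom.app X ≫ eqToHom (by rw [mul_one]; rfl) =
      (A.F 1).map (u.hom.app X)) (a : G) (X : C) :
    (A.ε 1 a).hom.app X = u.hom.app ((A.F a).obj X) ≫ eqToHom (by rw [one_mul]; rfl) := by
  haveI := A.isEquiv 1
  have coc := A.cocycle 1 1 a X
  rw [eps_congr A (mul_one 1) rfl, eps_congr A rfl (one_mul a)] at coc
  simp only [Category.assoc, eqToHom_trans] at coc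
  have key : (A.F 1).map (u.hom.app ((A.F a).obj X)) =
      (A.F 1).map ((A.ε 1 a).hom.app X ≫
        eqToHom (show (A.F (1 * a)).obj X = (A.F a).obj X by rw [one_mul])) := by
    rw [Functor.map_comp]
    rw [eqToHom_map (A.F 1) (show (A.F (1 * a)).obj X = (A.F a).obj X by rw [one_mul])]
    rw [← hu ((A.F a).obj X)]
    rw [← cancel_mono ((A.ε 1 a).hom.app X)]
    rw [← cancel_mono (eqToHom
      (show (A.F (1 * a)).obj X = (A.F (1 * (1 * a))).obj X by rw [one_mul (1 * a)]))]
    simpa [Category.assoc] using coc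

  have h2 := (A.F 1).map_injective key
  rw [h2]
  simp

end Helpers
/-- right unit law -/
lemma GA.runit (A : GrpAction G C) (u : A.F 1 ≅ 𝟭 C)
    (hu : ∀ X : C, (A.ε 1 1).hom.app X ≫ eqToHom (by rw [mul_one]; rfl) =
      (A.F 1).map (u.hom.app X)) (a : G) (X : C) :
    (A.ε a 1).hom.app X = (A.F a).map (u.hom.app X) ≫ eqToHom (by rw [mul_one]; rfl) := by
  have hu2 : (A.ε 1 1).hom.app X = (A.F 1).map (u.hom.app X) ≫
      eqToHom (show (A.F 1).obj X = (A.F (1 * 1)).obj X by rw [mul_one (1 : G)]) := by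
    rw [← hu X]; simp
  have coc := A.cocycle a 1 1 X
  rw [eps_congr A (mul_one a) rfl, eps_congr A rfl (mul_one (1 : G)), hu2] at coc
  simp only [Functor.map_comp, eqToHom_map, Category.assoc, eqToHom_trans,
    eqToHom_trans_assoc, Functor.id_obj, eqToHom_refl, Category.id_comp,
    Category.comp_id] at coc
  have nat := (A.ε a 1).hom.naturality (u.hom.app X)
  simp only [Functor.comp_map, Functor.id_map, Functor.id_obj] at nat
  rw [reassoc_of% nat] at coc
  rw [cancel_epi ((A.ε a 1).hom.app ((A.F 1).obj X))] at coc
  rw [map_congr A (mul_one a) (u.hom.app X)] at coc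
  simp only [Category.assoc, eqToHom_trans, eqToHom_refl, Category.comp_id, Category.id_comp,
    eqToHom_trans_assoc] at coc
  rw [← cancel_epi (eqToHom (show (A.F (a * 1)).obj ((A.F 1).obj X) =
      (A.F a).obj ((A.F 1).obj X) by rw [mul_one a])),
    ← cancel_mono (eqToHom (show (A.F (a * 1)).obj X = (A.F (a * (1 * 1))).obj X by
      rw [mul_one (1 : G)]))]
  simpa [eqToHom_trans] using coc
lemma fpow_comp_obj (F : C ⥤ C) (i j : ℕ) (X : C) :
    (fpow F (i + j)).obj X = (fpow F i).obj ((fpow F j).obj X) :=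
  (Functor.congr_obj (fpow_comp F i j) X).symm

lemma GA.epsIter_zero_app (A : GrpAction G C) (g : G) (u : A.F 1 ≅ 𝟭 C) (X : C) :
    (epsIter A g u 0).hom.app X = u.inv.app X ≫ eqToHom (by rw [pow_zero]) := by
  simp only [epsIter]
  erw [Iso.trans_hom, NatTrans.comp_app]
  simp [eqToHom_app]
  rfl

lemma GA.epsIter_succ_app (A : GrpAction G C) (g : G) (u : A.F 1 ≅ 𝟭 C) (i : ℕ) (X : C) :
    (epsIter A g u (i + 1)).hom.app X =
      (epsIter A g u i).hom.app ((A.F g).obj X) ≫ (A.ε (g ^ i) g).hom.app X ≫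
        eqToHom (by rw [pow_succ]) := by
  simp only [epsIter]
  erw [Iso.trans_hom, Iso.trans_hom, NatTrans.comp_app, NatTrans.comp_app]
  simp [eqToHom_app]
  rfl

lemma GA.epsIter_congr (A : GrpAction G C) (g : G) (u : A.F 1 ≅ 𝟭 C) {m n : ℕ}
    (h : m = n) (X : C) :
    (epsIter A g u m).hom.app X =
      eqToHom (by rw [h]) ≫ (epsIter A g u n).hom.app X ≫ eqToHom (by rw [h]) := by
  subst h; simp

lemma GA.epsIter_add (A : GrpAction G C) (u : A.F 1 ≅ 𝟭 C)
    (hu : ∀ X : C, (A.ε 1 1).hom.app X ≫ eqToHom (by rw [mul_one]; rfl) =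
      (A.F 1).map (u.hom.app X)) (g : G) (i j : ℕ) (X : C) :
    (epsIter A g u (i + j)).hom.app X ≫
        eqToHom (show (A.F (g ^ (i + j))).obj X = (A.F (g ^ i * g ^ j)).obj X by
          rw [pow_add]) =
      eqToHom (fpow_comp_obj (A.F g) i j X) ≫
        (epsIter A g u i).hom.app ((fpow (A.F g) j).obj X) ≫
        (A.F (g ^ i)).map ((epsIter A g u j).hom.app X) ≫
        (A.ε (g ^ i) (g ^ j)).hom.app X := by
  induction j generalizing X with
  | zero =>
    simp only [Nat.add_zero]
    rw [epsIter_zero_app, eps_congr A rfl (pow_zero g), runit A u hu (g ^ i) X]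
    simp only [eqToHom_map, Category.assoc, fpow]
    rw [show eqToHom (show (A.F (g ^ i)).obj ((A.F (g ^ 0)).obj X) =
          (A.F (g ^ i)).obj ((A.F 1).obj X) by rw [pow_zero]) =
        (A.F (g ^ i)).map (eqToHom (show (A.F (g ^ 0)).obj X = (A.F 1).obj X by
          rw [pow_zero])) from (eqToHom_map _ _).symm]
    simp [← Functor.map_comp_assoc, ← Functor.map_comp]
    exact (Category.id_comp _).symm
  | succ j ih =>
    have H : (epsIter A g u ((i + j) + 1)).hom.app X ≫
        eqToHom (show (A.F (g ^ ((i + j) + 1))).obj X = (A.F (g ^ i * g ^ (j + 1))).obj X by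
          rw [pow_succ, pow_add, pow_succ, mul_assoc]) =
      eqToHom (fpow_comp_obj (A.F g) i j ((A.F g).obj X)) ≫
        (epsIter A g u i).hom.app ((fpow (A.F g) j).obj ((A.F g).obj X)) ≫
        (A.F (g ^ i)).map ((epsIter A g u (j + 1)).hom.app X) ≫
        (A.ε (g ^ i) (g ^ (j + 1))).hom.app X := by
      rw [epsIter_succ_app A g u (i + j) X]
      rw [epsIter_succ_app A g u j X]
      rw [eps_congr A (pow_add g i j) rfl X]
      rw [eps_congr A rfl (pow_succ g j) X]
      have coc := A.cocycle (g ^ i) (g ^ j) g X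
      simp only [Functor.map_comp, eqToHom_map, Category.assoc, eqToHom_trans,
        eqToHom_trans_assoc, eqToHom_refl, Category.id_comp, Category.comp_id]
      rw [← reassoc_of% coc]
      rw [← reassoc_of% (ih ((A.F g).obj X))]
      simp only [Category.assoc, eqToHom_trans, eqToHom_trans_assoc]
      erw [Category.assoc, Category.assoc, Category.assoc, eqToHom_trans]
      rfl
    exact H
lemma GA.epsIter_one (A : GrpAction G C) (g : G) (u : A.F 1 ≅ 𝟭 C)
    (hu : ∀ X : C, (A.ε 1 1).hom.app X ≫ eqToHom (by rw [mul_one]; rfl) =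
      (A.F 1).map (u.hom.app X)) (X : C) :
    (epsIter A g u 1).hom.app X =
      eqToHom (show (fpow (A.F g) 1).obj X = (A.F (g ^ 1)).obj X by rw [pow_one]; rfl) := by
  rw [epsIter_succ_app A g u 0 X, epsIter_zero_app A g u ((A.F g).obj X),
    eps_congr A (pow_zero g) rfl X, lunit A u hu g X]
  simp only [Category.assoc, eqToHom_trans_assoc, eqToHom_trans, eqToHom_refl, Category.id_comp,
    Iso.inv_hom_id_app_assoc, Iso.inv_hom_id_app]
  erw [Category.assoc, eqToHom_trans_assoc, eqToHom_refl, Category.id_comp, Iso.inv_hom_id_app_assoc]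
  rfl

lemma GA.epsIter_shift (A : GrpAction G C) (u : A.F 1 ≅ 𝟭 C)
    (hu : ∀ X : C, (A.ε 1 1).hom.app X ≫ eqToHom (by rw [mul_one]; rfl) =
      (A.F 1).map (u.hom.app X)) (g : G) (d : ℕ) (hgd : g ^ d = 1) (k : ℕ) (X : C) :
    (epsIter A g u (k + d)).hom.app X ≫
        eqToHom (show (A.F (g ^ (k + d))).obj X = (A.F (g ^ k)).obj X by
          rw [pow_add, hgd, mul_one]) =
      eqToHom (fpow_comp_obj (A.F g) k d X) ≫
        (fpow (A.F g) k).map ((epsIter A g u d).hom.app X ≫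
          eqToHom (show (A.F (g ^ d)).obj X = (A.F 1).obj X by rw [hgd]) ≫ u.hom.app X) ≫
        (epsIter A g u k).hom.app X := by
  have h1 := epsIter_add A u hu g k d X
  rw [eps_congr A rfl hgd X, runit A u hu (g ^ k) X] at h1
  have nat := (epsIter A g u k).hom.naturality ((epsIter A g u d).hom.app X ≫
    eqToHom (show (A.F (g ^ d)).obj X = (A.F 1).obj X by rw [hgd]) ≫ u.hom.app X)
  rw [show eqToHom (show (A.F (g ^ k)).obj ((A.F (g ^ d)).obj X) =
        (A.F (g ^ k)).obj ((A.F 1).obj X) by rw [hgd]) =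
      (A.F (g ^ k)).map (eqToHom (show (A.F (g ^ d)).obj X = (A.F 1).obj X by
        rw [hgd])) from (eqToHom_map _ _).symm] at h1
  simp only [Functor.map_comp, Category.assoc] at h1 nat
  rw [← reassoc_of% nat] at h1
  rw [← cancel_mono (eqToHom (show (A.F (g ^ k)).obj X = (A.F (g ^ k * g ^ d)).obj X by
    rw [hgd, mul_one]))]
  simp only [Category.assoc, eqToHom_trans, Functor.map_comp]
  simp only [Category.assoc, eqToHom_trans] at h1
  exact h1
lemma GA.gen_pow_val (d : ℕ) [NeZero d] (x : Multiplicative (ZMod d)) :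
    (Multiplicative.ofAdd (1 : ZMod d)) ^ (ZMod.val (Multiplicative.toAdd x)) = x := by
  rw [← ofAdd_nsmul, nsmul_eq_mul, mul_one, ZMod.natCast_val, ZMod.cast_id', id_eq,
    ofAdd_toAdd]

lemma GA.cyclicC_app (d : ℕ) [NeZero d] (A : GrpAction (Multiplicative (ZMod d)) C)
    (u : A.F 1 ≅ 𝟭 C) (X : C) :
    (cyclicC d A u).hom.app X =
      (epsIter A (Multiplicative.ofAdd (1 : ZMod d)) u d).hom.app X ≫
        eqToHom (show (A.F ((Multiplicative.ofAdd (1 : ZMod d)) ^ d)).obj X =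
          (A.F 1).obj X by rw [gen_pow_card]) ≫ u.hom.app X := by
  simp [cyclicC, eqToHom_app]
lemma GA.cyclic_compat (d : ℕ) [NeZero d] (A : GrpAction (Multiplicative (ZMod d)) C)
    (u : A.F 1 ≅ 𝟭 C)
    (hu : ∀ X : C, (A.ε 1 1).hom.app X ≫ eqToHom (by rw [mul_one]; rfl) =
      (A.F 1).map (u.hom.app X)) :
    IsCompatiblePair d (A.F (Multiplicative.ofAdd (1 : ZMod d))) (cyclicC d A u) := by
  intro X
  have ha : (epsIter A (Multiplicative.ofAdd (1 : ZMod d)) u (d + 1)).hom.app X ≫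
      eqToHom (show (A.F ((Multiplicative.ofAdd (1 : ZMod d)) ^ (d + 1))).obj X =
        (𝟭 C).obj ((A.F (Multiplicative.ofAdd (1 : ZMod d))).obj X) by
          rw [pow_succ, gen_pow_card, one_mul]; rfl) =
      (cyclicC d A u).hom.app ((A.F (Multiplicative.ofAdd (1 : ZMod d))).obj X) := by
    rw [cyclicC_app, epsIter_succ_app, eps_congr A (gen_pow_card d) rfl X,
      lunit A u hu _ X]
    simp only [Category.assoc, eqToHom_trans, eqToHom_refl, Category.comp_id]
    erw [Category.assoc, Category.assoc, Category.assoc, eqToHom_trans, eqToHom_refl, Category.comp_id]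
    rfl
  have S := epsIter_shift A u hu (Multiplicative.ofAdd (1 : ZMod d)) d (gen_pow_card d) 1 X
  rw [epsIter_one A _ u hu X, ← cyclicC_app d A u X] at S
  have S2 : (epsIter A (Multiplicative.ofAdd (1 : ZMod d)) u (1 + d)).hom.app X =
      eqToHom (fpow_comp_obj (A.F (Multiplicative.ofAdd (1 : ZMod d))) 1 d X) ≫
        (fpow (A.F (Multiplicative.ofAdd (1 : ZMod d))) 1).map ((cyclicC d A u).hom.app X) ≫
        eqToHom (show (fpow (A.F (Multiplicative.ofAdd (1 : ZMod d))) 1).obj X =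
          (A.F ((Multiplicative.ofAdd (1 : ZMod d)) ^ (1 + d))).obj X by
            rw [pow_add, gen_pow_card, mul_one, pow_one]; rfl) := by
    rw [← cancel_mono (eqToHom (show
      (A.F ((Multiplicative.ofAdd (1 : ZMod d)) ^ (1 + d))).obj X =
      (A.F ((Multiplicative.ofAdd (1 : ZMod d)) ^ (1 : ℕ))).obj X by
        rw [pow_add, gen_pow_card, mul_one]))]
    simpa [Category.assoc, eqToHom_trans] using S
  rw [← ha, epsIter_congr A (Multiplicative.ofAdd (1 : ZMod d)) u
    (show d + 1 = 1 + d by omega) X, S2]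
  simp only [Category.assoc, eqToHom_trans, eqToHom_trans_assoc]
  erw [eqToHom_trans_assoc]
  exact ((Category.id_comp _).trans (Category.comp_id _)).symm

/-- Every `C_d`-action on `C` is isomorphic to the `C_d`-action induced by a
compatible pair: for a `C_d`-action `{F_{gⁱ}, ε}` with `F = F_g` (`g` the generator) and unit
`u`, the natural isomorphism `c = u ∘ ε^{(d)} : F^d ≅ 𝟭 C` satisfies `F c = c F`, and the
given action is isomorphic to the action induced by the pair `(F, c)`. -/
theorem cyclic_action_isomorphic_to_induced (d : ℕ) [NeZero d] (hd : 2 ≤ d)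
    (A : GrpAction (Multiplicative (ZMod d)) C) (u : A.F 1 ≅ 𝟭 C)
    (hu : ∀ X : C, (A.ε 1 1).hom.app X ≫ eqToHom (by rw [mul_one]; rfl) =
      (A.F 1).map (u.hom.app X)) :
    IsCompatiblePair d (A.F (Multiplicative.ofAdd (1 : ZMod d))) (cyclicC d A u) ∧
    ∃ δ : ∀ x : Multiplicative (ZMod d),
        fpow (A.F (Multiplicative.ofAdd (1 : ZMod d))) (ZMod.val (Multiplicative.toAdd x)) ≅
          A.F x,
      ∀ (x y : Multiplicative (ZMod d)) (X : C),
        (inducedEps d (A.F (Multiplicative.ofAdd (1 : ZMod d))) (cyclicC d A u) x y).hom.app X ≫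
            (δ (x * y)).hom.app X =
          (δ x).hom.app
              ((fpow (A.F (Multiplicative.ofAdd (1 : ZMod d)))
                (ZMod.val (Multiplicative.toAdd y))).obj X) ≫
            (A.F x).map ((δ y).hom.app X) ≫ (A.ε x y).hom.app X := by
  refine ⟨GA.cyclic_compat d A u hu, ⟨fun x =>
    epsIter A (Multiplicative.ofAdd (1 : ZMod d)) u (ZMod.val (Multiplicative.toAdd x)) ≪≫
      eqToIso (by rw [GA.gen_pow_val]), fun x y X => ?_⟩⟩
  by_cases h : ZMod.val (Multiplicative.toAdd x) + ZMod.val (Multiplicative.toAdd y) < d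
  · have KEY := GA.epsIter_add A u hu (Multiplicative.ofAdd (1 : ZMod d))
      (ZMod.val (Multiplicative.toAdd x)) (ZMod.val (Multiplicative.toAdd y)) X
    have hval : ZMod.val (Multiplicative.toAdd (x * y)) =
        ZMod.val (Multiplicative.toAdd x) + ZMod.val (Multiplicative.toAdd y) := by
      rw [toAdd_mul, ZMod.val_add, Nat.mod_eq_of_lt h]
    simp only [inducedEps, dif_pos h, Iso.trans_hom, eqToIso.hom, NatTrans.comp_app,
      eqToHom_app]
    rw [GA.epsIter_congr A (Multiplicative.ofAdd (1 : ZMod d)) u hval X]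
    rw [GA.eps_congr A (GA.gen_pow_val d x) (GA.gen_pow_val d y) X,
      GA.map_congr A (GA.gen_pow_val d x)] at KEY
    have KEY4 := congrArg (fun t => eqToHom
      ((fpow_comp_obj (A.F (Multiplicative.ofAdd (1 : ZMod d)))
        (ZMod.val (Multiplicative.toAdd x)) (ZMod.val (Multiplicative.toAdd y)) X).symm) ≫ t) KEY
    simp only [Category.assoc, eqToHom_trans, eqToHom_trans_assoc, eqToHom_refl,
      Category.id_comp, Functor.map_comp, eqToHom_map] at KEY4
    rw [← cancel_mono (eqToHom (show (A.F (x * y)).obj X =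
        (A.F ((Multiplicative.ofAdd (1 : ZMod d)) ^ (ZMod.val (Multiplicative.toAdd x)) *
          (Multiplicative.ofAdd (1 : ZMod d)) ^ (ZMod.val (Multiplicative.toAdd y)))).obj X by
        rw [GA.gen_pow_val, GA.gen_pow_val]))]
    simp only [Category.assoc, eqToHom_trans, Functor.map_comp, eqToHom_map]
    simpa [eqToHom_trans] using KEY4
  · have hx := ZMod.val_lt (Multiplicative.toAdd x)
    have hy := ZMod.val_lt (Multiplicative.toAdd y)
    have hval : ZMod.val (Multiplicative.toAdd (x * y)) =
        ZMod.val (Multiplicative.toAdd x) + ZMod.val (Multiplicative.toAdd y) - d := by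
      rw [toAdd_mul, ZMod.val_add, Nat.mod_eq_sub_mod (by omega), Nat.mod_eq_of_lt (by omega)]
    have KEY := GA.epsIter_add A u hu (Multiplicative.ofAdd (1 : ZMod d))
      (ZMod.val (Multiplicative.toAdd x)) (ZMod.val (Multiplicative.toAdd y)) X
    rw [GA.eps_congr A (GA.gen_pow_val d x) (GA.gen_pow_val d y) X,
      GA.map_congr A (GA.gen_pow_val d x)] at KEY
    have KEY4 := congrArg (fun t => eqToHom
      ((fpow_comp_obj (A.F (Multiplicative.ofAdd (1 : ZMod d)))
        (ZMod.val (Multiplicative.toAdd x)) (ZMod.val (Multiplicative.toAdd y)) X).symm) ≫ t) KEY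
    simp only [Category.assoc, eqToHom_trans, eqToHom_trans_assoc, eqToHom_refl,
      Category.id_comp, Functor.map_comp, eqToHom_map] at KEY4
    have SH := GA.epsIter_shift A u hu (Multiplicative.ofAdd (1 : ZMod d)) d
      (gen_pow_card d)
      (ZMod.val (Multiplicative.toAdd x) + ZMod.val (Multiplicative.toAdd y) - d) X
    rw [← GA.cyclicC_app d A u X] at SH
    have SH2 := congrArg (fun t => eqToHom
      ((fpow_comp_obj (A.F (Multiplicative.ofAdd (1 : ZMod d)))
        (ZMod.val (Multiplicative.toAdd x) + ZMod.val (Multiplicative.toAdd y) - d) d X).symm) ≫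
        t) SH
    simp only [Category.assoc, eqToHom_trans, eqToHom_trans_assoc, eqToHom_refl,
      Category.id_comp] at SH2
    simp only [inducedEps, dif_neg h, Iso.trans_hom, eqToIso.hom, NatTrans.comp_app,
      eqToHom_app, Functor.isoWhiskerRight_hom, Functor.whiskerRight_app, Functor.comp_obj, Functor.id_obj,
      Category.assoc]
    rw [GA.epsIter_congr A (Multiplicative.ofAdd (1 : ZMod d)) u hval X]
    simp only [Category.assoc, eqToHom_trans, eqToHom_trans_assoc, eqToHom_refl,
      Category.id_comp, Category.comp_id]
    rw [← reassoc_of% SH2]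
    rw [GA.epsIter_congr A (Multiplicative.ofAdd (1 : ZMod d)) u
      (show ZMod.val (Multiplicative.toAdd x) + ZMod.val (Multiplicative.toAdd y) - d + d =
        ZMod.val (Multiplicative.toAdd x) + ZMod.val (Multiplicative.toAdd y) by omega) X]
    rw [← cancel_mono (eqToHom (show (A.F (x * y)).obj X =
        (A.F ((Multiplicative.ofAdd (1 : ZMod d)) ^ (ZMod.val (Multiplicative.toAdd x)) *
          (Multiplicative.ofAdd (1 : ZMod d)) ^ (ZMod.val (Multiplicative.toAdd y)))).obj X by
        rw [GA.gen_pow_val, GA.gen_pow_val]))]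
    simp only [Category.assoc, eqToHom_trans, Functor.map_comp, eqToHom_map]
    simpa [eqToHom_trans] using KEY4
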